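/- Let K ≥ 1 be an integer. For each ℓ ∈ {1, …, K} let (x_{t,ℓ})_{t≥1} be a real sequence with x_{t,ℓ} → m_ℓ as t → ∞, and let (y_t)_{t≥1} be a real sequence with y_t → m_y as t → ∞. Suppose the series Σ_{t=1}^∞ ( Σ_{ℓ=1}^K x_{t,ℓ} + y_t ) converges, with sum L. Then lim_{D→∞} (1/(DK)) Σ_{T=1}^D Σ_{q=1}^K [ Σ_{t=1}^{T−1} ( Σ_{ℓ=1}^K x_{t,ℓ} + y_t ) + Σ_{ℓ=1}^q x_{T,ℓ} + y_T ] = L − (1/K) Σ_{ℓ=1}^K (ℓ−1) m_ℓ (Proposition 2: the series-based relative value function and the Cesàro-limit-based relative value function of an atomic policy differ by the explicit constant κ = −(1/K) Σ_{ℓ=1}^K (ℓ−1) m_ℓ). -/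

import Mathlib

open Filter Finset Matrix

/-- A row-stochastic matrix. -/
def RowStochastic {S : Type*} [Fintype S] (P : Matrix S S ℝ) : Prop :=
  (∀ s s', 0 ≤ P s s') ∧ ∀ s, ∑ s', P s s' = 1

lemma stmt11_aux (K : ℕ) (f : ℕ → ℝ) :
    ∑ q ∈ Finset.range K, ∑ ℓ ∈ Finset.range (q + 1), f ℓ
      = ∑ ℓ ∈ Finset.range K, ((K : ℝ) - ℓ) * f ℓ := by
  induction K with
  | zero => simp
  | succ n ih =>
    rw [Finset.sum_range_succ, ih]
    have h2 : ∀ ℓ : ℕ, (((n + 1 : ℕ) : ℝ) - ℓ) * f ℓ = ((n : ℝ) - ℓ) * f ℓ + f ℓ := by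
      intro ℓ; push_cast; ring
    rw [Finset.sum_congr rfl fun ℓ _ => h2 ℓ, Finset.sum_add_distrib]
    have h3 : ∑ ℓ ∈ Finset.range (n + 1), ((n : ℝ) - ℓ) * f ℓ
        = ∑ ℓ ∈ Finset.range n, ((n : ℝ) - ℓ) * f ℓ := by
      rw [Finset.sum_range_succ]; simp
    rw [h3]

/-- **Proposition 2**: if `x t ℓ → m ℓ` for each atomic step `ℓ < K`, `y t → my`, and the series
`Σ_t (Σ_{ℓ<K} x t ℓ + y t)` converges with sum `L`, then the double Cesàro average appearing in
the Cesàro-limit definition of the relative value function converges to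
`L − (1/K) Σ_{ℓ<K} ℓ · m ℓ`. -/
theorem stmt11 (K : ℕ) (hK : 1 ≤ K) (x : ℕ → ℕ → ℝ) (m : ℕ → ℝ) (y : ℕ → ℝ) (my L : ℝ)
    (hx : ∀ ℓ, ℓ < K → Filter.Tendsto (fun t => x t ℓ) Filter.atTop (nhds (m ℓ)))
    (hy : Filter.Tendsto y Filter.atTop (nhds my))
    (hL : Filter.Tendsto
      (fun n => ∑ t ∈ Finset.range n, ((∑ ℓ ∈ Finset.range K, x t ℓ) + y t))
      Filter.atTop (nhds L)) :
    Filter.Tendsto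
      (fun D : ℕ => ((D : ℝ) * (K : ℝ))⁻¹ * ∑ T ∈ Finset.range D, ∑ q ∈ Finset.range K,
        ((∑ t ∈ Finset.range T, ((∑ ℓ ∈ Finset.range K, x t ℓ) + y t))
          + (∑ ℓ ∈ Finset.range (q + 1), x T ℓ) + y T))
      Filter.atTop
      (nhds (L - (K : ℝ)⁻¹ * ∑ ℓ ∈ Finset.range K, (ℓ : ℝ) * m ℓ)) := by
  have hKne : (K : ℝ) ≠ 0 := by positivity
  set S : ℕ → ℝ := fun n => ∑ t ∈ Finset.range n, ((∑ ℓ ∈ Finset.range K, x t ℓ) + y t) with hS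
  set a : ℕ → ℝ := fun T => S (T + 1) - (K : ℝ)⁻¹ * ∑ ℓ ∈ Finset.range K, (ℓ : ℝ) * x T ℓ
    with ha
  have hSshift : Tendsto (fun T => S (T + 1)) atTop (nhds L) :=
    hL.comp (tendsto_add_atTop_nat 1)
  have hsum : Tendsto (fun T => ∑ ℓ ∈ Finset.range K, (ℓ : ℝ) * x T ℓ) atTop
      (nhds (∑ ℓ ∈ Finset.range K, (ℓ : ℝ) * m ℓ)) := by
    apply tendsto_finset_sum
    intro ℓ hℓ
    exact tendsto_const_nhds.mul (hx ℓ (Finset.mem_range.mp hℓ))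
  have haT : Tendsto a atTop
      (nhds (L - (K : ℝ)⁻¹ * ∑ ℓ ∈ Finset.range K, (ℓ : ℝ) * m ℓ)) :=
    hSshift.sub (tendsto_const_nhds.mul hsum)
  have hces := haT.cesaro
  have key : ∀ D : ℕ,
      ((D : ℝ) * (K : ℝ))⁻¹ * ∑ T ∈ Finset.range D, ∑ q ∈ Finset.range K,
        (S T + (∑ ℓ ∈ Finset.range (q + 1), x T ℓ) + y T)
      = (D : ℝ)⁻¹ * ∑ T ∈ Finset.range D, a T := by
    intro D
    have hinner : ∀ T, ∑ q ∈ Finset.range K,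
        (S T + (∑ ℓ ∈ Finset.range (q + 1), x T ℓ) + y T) = (K : ℝ) * a T := by
      intro T
      have hstep : S (T + 1) = S T + ((∑ ℓ ∈ Finset.range K, x T ℓ) + y T) :=
        Finset.sum_range_succ _ T
      have hsplit : ∑ ℓ ∈ Finset.range K, ((K : ℝ) - ℓ) * x T ℓ
          = (K : ℝ) * (∑ ℓ ∈ Finset.range K, x T ℓ)
            - ∑ ℓ ∈ Finset.range K, (ℓ : ℝ) * x T ℓ := by
        rw [Finset.mul_sum, ← Finset.sum_sub_distrib]
        exact Finset.sum_congr rfl fun ℓ _ => by ring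
      rw [Finset.sum_add_distrib, Finset.sum_add_distrib, Finset.sum_const,
        Finset.sum_const, stmt11_aux, hsplit, ha]
      simp only [nsmul_eq_mul, hstep]
      field_simp
      simp only [Finset.card_range]
      ring
    rw [mul_inv, mul_assoc]
    congr 1
    rw [Finset.mul_sum]
    apply Finset.sum_congr rfl
    intro T _
    rw [hinner T, ← mul_assoc, inv_mul_cancel₀ hKne, one_mul]
  exact (funext key : _) ▸ hces
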